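/- Let ρ_E be a positive definite d×d density matrix with eigenvalues λ₁,…,λ_d > 0, let λ_h := (Σ_{i=1}^d λ_i^{-1})^{-1}, and let α ≥ 0. Then for every unit vector ψ ∈ ℂ^d ⊗ ℂ^d with reduced state ρ_B on the second factor, every eigenvalue of the Hermitian matrix ρ_E ⊗ ρ_B − α·|ψ⟩⟨ψ| is at least min(0, λ_h − α); in particular the matrix is positive semidefinite when α ≤ λ_h, and λ_min(ρ_E ⊗ ρ_B − α|ψ⟩⟨ψ|) ≥ λ_h − α when α > λ_h. -/

import Mathlib

open Matrix BigOperators Kronecker ComplexOrder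

/-- Cauchy–Schwarz for finite sums of complex numbers. -/
lemma qelb_cs_sum {ι : Type*} [Fintype ι] (f g : ι → ℂ) :
    ‖∑ p, f p * g p‖ ^ 2 ≤ (∑ p, ‖f p‖ ^ 2) * (∑ p, ‖g p‖ ^ 2) := by
  have h1 : ‖∑ p, f p * g p‖ ≤ ∑ p, ‖f p‖ * ‖g p‖ :=
    (norm_sum_le _ _).trans_eq (by simp [norm_mul])
  calc ‖∑ p, f p * g p‖ ^ 2 ≤ (∑ p, ‖f p‖ * ‖g p‖) ^ 2 :=
        pow_le_pow_left₀ (norm_nonneg _) h1 2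
    _ ≤ (∑ p, ‖f p‖ ^ 2) * (∑ p, ‖g p‖ ^ 2) :=
        Finset.sum_mul_sq_le_sq_mul_sq _ _ _

/-- `conj z * z` as a real cast. -/
lemma qelb_conj_mul (z : ℂ) : (starRingEnd ℂ) z * z = ((‖z‖ ^ 2 : ℝ) : ℂ) := by
  rw [mul_comm, Complex.mul_conj, Complex.normSq_eq_norm_sq]

/-- Reordering a fivefold sum. -/
lemma qelb_sum_reorder {N : Type*} [Fintype N] (F : N → N → N → N → N → ℂ) :
    ∑ j, ∑ k, ∑ j', ∑ l, ∑ i, F i j k j' l = ∑ i, ∑ j, ∑ j', ∑ k, ∑ l, F i j k j' l := by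
  calc ∑ j, ∑ k, ∑ j', ∑ l, ∑ i, F i j k j' l
      = ∑ j, ∑ k, ∑ j', ∑ i, ∑ l, F i j k j' l := by
        refine Finset.sum_congr rfl fun j _ => Finset.sum_congr rfl fun k _ =>
          Finset.sum_congr rfl fun j' _ => Finset.sum_comm
    _ = ∑ j, ∑ k, ∑ i, ∑ j', ∑ l, F i j k j' l := by
        refine Finset.sum_congr rfl fun j _ => Finset.sum_congr rfl fun k _ => Finset.sum_comm
    _ = ∑ j, ∑ i, ∑ k, ∑ j', ∑ l, F i j k j' l := by
        refine Finset.sum_congr rfl fun j _ => Finset.sum_comm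
    _ = ∑ i, ∑ j, ∑ k, ∑ j', ∑ l, F i j k j' l := Finset.sum_comm
    _ = ∑ i, ∑ j, ∑ j', ∑ k, ∑ l, F i j k j' l := by
        refine Finset.sum_congr rfl fun i _ => Finset.sum_congr rfl fun j _ => Finset.sum_comm

/-- Reordering a threefold sum. -/
lemma qelb_sum_reorder3 {N : Type*} [Fintype N] (G : N → N → N → ℂ) :
    ∑ j, ∑ j', ∑ m, G m j j' = ∑ m, ∑ j, ∑ j', G m j j' := by
  calc ∑ j, ∑ j', ∑ m, G m j j'
      = ∑ j, ∑ m, ∑ j', G m j j' := by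
        refine Finset.sum_congr rfl fun j _ => Finset.sum_comm
    _ = ∑ m, ∑ j, ∑ j', G m j j' := Finset.sum_comm

/-- **Eigenvalue lower bound for the quantum-illumination matrix.** Let `ρ_E` be a positive
definite `d×d` density matrix with eigenvalues `λ₁,…,λ_d > 0`, let
`λ_h := (Σᵢ λᵢ⁻¹)⁻¹`, and let `α ≥ 0`. For every unit vector `ψ ∈ ℂ^d ⊗ ℂ^d` with reduced
state `ρ_B` on the second factor, every eigenvalue of `ρ_E ⊗ ρ_B − α|ψ⟩⟨ψ|` is at least
`min(0, λ_h − α)`; in particular the matrix is positive semidefinite when `α ≤ λ_h`, and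
all its eigenvalues are at least `λ_h − α` when `α > λ_h`. -/
theorem quantum_eigenvalue_lower_bound {d : ℕ}
    (ρE : Matrix (Fin d) (Fin d) ℂ) (hE : ρE.PosDef) (hEtr : ρE.trace = 1)
    (lamH : ℝ) (hlamH : lamH = (∑ i, (hE.1.eigenvalues i)⁻¹)⁻¹)
    (α : ℝ) (hα : 0 ≤ α)
    (ψ : Fin d × Fin d → ℂ) (hψ : ∑ p, ‖ψ p‖ ^ 2 = 1)
    (ρB : Matrix (Fin d) (Fin d) ℂ)
    (hρB : ρB = Matrix.of fun k l => ∑ i, ψ (i, k) * star (ψ (i, l)))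
    (hM : (ρE ⊗ₖ ρB - α • vecMulVec ψ (star ψ)).IsHermitian) :
    (∀ i, min 0 (lamH - α) ≤ hM.eigenvalues i) ∧
      (α ≤ lamH → (ρE ⊗ₖ ρB - α • vecMulVec ψ (star ψ)).PosSemidef) ∧
      (lamH < α → ∀ i, lamH - α ≤ hM.eigenvalues i) := by
  rcases Nat.eq_zero_or_pos d with hd | hd
  · exfalso; subst hd; simp at hψ
  have hdne : Nonempty (Fin d) := ⟨⟨0, hd⟩⟩
  set U : Matrix (Fin d) (Fin d) ℂ := (hE.1.eigenvectorUnitary : Matrix (Fin d) (Fin d) ℂ)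
    with hUdef
  set lam : Fin d → ℝ := hE.1.eigenvalues with hlamdef
  have hlampos : ∀ m, 0 < lam m := fun m => hE.eigenvalues_pos m
  have hSpos : 0 < ∑ m, (lam m)⁻¹ :=
    Finset.sum_pos (fun m _ => inv_pos.mpr (hlampos m)) Finset.univ_nonempty
  have hlamHpos : 0 < lamH := by rw [hlamH]; exact inv_pos.mpr hSpos
  have hentry : ∀ j j', ρE j j' = ∑ m, U j m * (lam m : ℂ) * (starRingEnd ℂ) (U j' m) := by
    intro j j'
    nth_rewrite 1 [hE.1.spectral_theorem]
    simp [Matrix.mul_apply, Matrix.diagonal_apply, Finset.sum_mul, Matrix.star_apply, hUdef,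
      hlamdef]
  have hU1 : ∀ j j', ∑ m, U j m * (starRingEnd ℂ) (U j' m) = if j = j' then 1 else 0 := by
    intro j j'
    have h := hE.1.eigenvectorUnitary.2
    rw [Matrix.mem_unitaryGroup_iff] at h
    have := congrFun (congrFun h j) j'
    simpa [Matrix.mul_apply, Matrix.one_apply, Matrix.star_apply, hUdef] using this
  have hU2 : ∀ m, ∑ j, ‖U j m‖ ^ 2 = 1 := by
    intro m
    have h := hE.1.eigenvectorUnitary.2
    rw [Matrix.mem_unitaryGroup_iff'] at h
    have h2 := congrFun (congrFun h m) m
    simp only [Matrix.mul_apply, Matrix.one_apply_eq, Matrix.star_apply, RCLike.star_def,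
      RCLike.conj_mul] at h2
    have h3 : ((∑ j, ‖U j m‖ ^ 2 : ℝ) : ℂ) = 1 := by push_cast; rw [hUdef]; exact h2
    exact_mod_cast h3
  set M : Matrix (Fin d × Fin d) (Fin d × Fin d) ℂ :=
    ρE ⊗ₖ ρB - α • vecMulVec ψ (star ψ) with hMdef
  -- the key quadratic-form lower bound
  have quad : ∀ x : Fin d × Fin d → ℂ,
      min 0 (lamH - α) * (∑ p, ‖x p‖ ^ 2) ≤ (star x ⬝ᵥ M *ᵥ x).re := by
    intro x
    set z : Fin d → Fin d → ℂ := fun i j => ∑ k, (starRingEnd ℂ) (ψ (i, k)) * x (j, k)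
      with hzdef
    set c : Fin d → Fin d → ℂ := fun i m => ∑ j, (starRingEnd ℂ) (U j m) * z i j with hcdef
    have hzc : ∀ i j, (starRingEnd ℂ) (z i j) = ∑ k, ψ (i, k) * (starRingEnd ℂ) (x (j, k)) := by
      intro i j
      simp [hzdef, map_sum]
    have hcc : ∀ i m, (starRingEnd ℂ) (c i m) = ∑ j, U j m * (starRingEnd ℂ) (z i j) := by
      intro i m
      simp [hcdef, map_sum]
    -- ⟨ψ, x⟩ in terms of c
    have hψx : star ψ ⬝ᵥ x = ∑ i, ∑ m, U i m * c i m := by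
      have h1 : star ψ ⬝ᵥ x = ∑ i, z i i := by
        simp only [dotProduct, Pi.star_apply, RCLike.star_def, Fintype.sum_prod_type,
          hzdef]
      rw [h1]
      refine Finset.sum_congr rfl fun i _ => ?_
      have h2 : ∑ m, U i m * c i m = ∑ j, (∑ m, U i m * (starRingEnd ℂ) (U j m)) * z i j := by
        simp only [hcdef, Finset.mul_sum, Finset.sum_mul]
        rw [Finset.sum_comm]
        refine Finset.sum_congr rfl fun j _ => Finset.sum_congr rfl fun m _ => by ring
      rw [h2]
      simp [hU1]
    -- quadratic form of the Kronecker part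
    have hQ : star x ⬝ᵥ (ρE ⊗ₖ ρB) *ᵥ x
        = ∑ i, ∑ m, ((lam m : ℂ)) * ((starRingEnd ℂ) (c i m) * c i m) := by
      calc star x ⬝ᵥ (ρE ⊗ₖ ρB) *ᵥ x
          = ∑ j, ∑ k, ∑ j', ∑ l, ∑ i,
              ψ (i, k) * (starRingEnd ℂ) (x (j, k)) * ρE j j' *
                ((starRingEnd ℂ) (ψ (i, l)) * x (j', l)) := by
            simp only [dotProduct, Matrix.mulVec, Matrix.kroneckerMap_apply,
              Pi.star_apply, RCLike.star_def, Fintype.sum_prod_type, hρB, Matrix.of_apply,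
              Finset.mul_sum, Finset.sum_mul]
            refine Finset.sum_congr rfl fun j _ => Finset.sum_congr rfl fun k _ =>
              Finset.sum_congr rfl fun j' _ => Finset.sum_congr rfl fun l _ =>
              Finset.sum_congr rfl fun i _ => by ring
        _ = ∑ i, ∑ j, ∑ j', ∑ k, ∑ l,
              ψ (i, k) * (starRingEnd ℂ) (x (j, k)) * ρE j j' *
                ((starRingEnd ℂ) (ψ (i, l)) * x (j', l)) :=
            qelb_sum_reorder _
        _ = ∑ i, ∑ j, ∑ j', (starRingEnd ℂ) (z i j) * ρE j j' * z i j' := by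
            refine Finset.sum_congr rfl fun i _ => Finset.sum_congr rfl fun j _ =>
              Finset.sum_congr rfl fun j' _ => ?_
            rw [hzc i j, hzdef]
            simp only [Finset.sum_mul, Finset.mul_sum]
            rw [Finset.sum_comm]
        _ = ∑ i, ∑ j, ∑ j', ∑ m,
              (lam m : ℂ) * ((U j m * (starRingEnd ℂ) (z i j)) *
                ((starRingEnd ℂ) (U j' m) * z i j')) := by
            refine Finset.sum_congr rfl fun i _ => Finset.sum_congr rfl fun j _ =>
              Finset.sum_congr rfl fun j' _ => ?_
            rw [hentry j j']
            simp only [Finset.sum_mul, Finset.mul_sum]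
            refine Finset.sum_congr rfl fun m _ => by ring
        _ = ∑ i, ∑ m, ∑ j, ∑ j',
              (lam m : ℂ) * ((U j m * (starRingEnd ℂ) (z i j)) *
                ((starRingEnd ℂ) (U j' m) * z i j')) := by
            refine Finset.sum_congr rfl fun i _ => qelb_sum_reorder3 _
        _ = ∑ i, ∑ m, ((lam m : ℂ)) * ((starRingEnd ℂ) (c i m) * c i m) := by
            refine Finset.sum_congr rfl fun i _ => Finset.sum_congr rfl fun m _ => ?_
            rw [hcc i m, hcdef]
            simp only [Finset.sum_mul, Finset.mul_sum]
            rw [Finset.sum_comm]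
    -- real form of the Kronecker part
    have hQC : star x ⬝ᵥ (ρE ⊗ₖ ρB) *ᵥ x
        = ((∑ i, ∑ m, lam m * ‖c i m‖ ^ 2 : ℝ) : ℂ) := by
      rw [hQ]
      push_cast
      refine Finset.sum_congr rfl fun i _ => Finset.sum_congr rfl fun m _ => ?_
      rw [qelb_conj_mul]
      push_cast
      ring
    -- the rank-one part
    have hR : star x ⬝ᵥ (α • vecMulVec ψ (star ψ)) *ᵥ x
        = (α : ℂ) * ((starRingEnd ℂ) (star ψ ⬝ᵥ x) * (star ψ ⬝ᵥ x)) := by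
      have hconj : (starRingEnd ℂ) (star ψ ⬝ᵥ x) = ∑ p, ψ p * (starRingEnd ℂ) (x p) := by
        simp [dotProduct, map_sum, mul_comm]
      rw [hconj]
      simp only [dotProduct, Matrix.mulVec, Matrix.vecMulVec_apply, Matrix.smul_apply,
        Pi.star_apply, RCLike.star_def, Complex.real_smul, Finset.mul_sum, Finset.sum_mul]
      rw [Finset.sum_comm]
      refine Finset.sum_congr rfl fun p _ => Finset.sum_congr rfl fun q _ => by ring
    have hRC : star x ⬝ᵥ (α • vecMulVec ψ (star ψ)) *ᵥ x
        = ((α * ‖star ψ ⬝ᵥ x‖ ^ 2 : ℝ) : ℂ) := by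
      rw [hR, qelb_conj_mul]
      push_cast
      ring
    have hMre : (star x ⬝ᵥ M *ᵥ x).re
        = (∑ i, ∑ m, lam m * ‖c i m‖ ^ 2) - α * ‖star ψ ⬝ᵥ x‖ ^ 2 := by
      rw [hMdef, Matrix.sub_mulVec, dotProduct_sub, Complex.sub_re, hQC, hRC,
        Complex.ofReal_re, Complex.ofReal_re]
    -- weighted Cauchy–Schwarz
    have hCS : ‖star ψ ⬝ᵥ x‖ ^ 2
        ≤ (∑ m, (lam m)⁻¹) * (∑ i, ∑ m, lam m * ‖c i m‖ ^ 2) := by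
      set f : Fin d × Fin d → ℂ := fun p => U p.1 p.2 * ((Real.sqrt (lam p.2))⁻¹ : ℝ)
        with hfdef
      set g : Fin d × Fin d → ℂ := fun p => ((Real.sqrt (lam p.2) : ℝ) : ℂ) * c p.1 p.2
        with hgdef
      have hfg : ∀ p, f p * g p = U p.1 p.2 * c p.1 p.2 := by
        intro p
        have hs : ((Real.sqrt (lam p.2) : ℝ) : ℂ) ≠ 0 := by
          norm_cast
          exact ne_of_gt (Real.sqrt_pos.mpr (hlampos p.2))
        rw [hfdef, hgdef]
        push_cast
        field_simp
      have h1 : star ψ ⬝ᵥ x = ∑ p, f p * g p := by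
        rw [hψx, Fintype.sum_prod_type]
        exact Finset.sum_congr rfl fun i _ => Finset.sum_congr rfl fun m _ => (hfg (i, m)).symm
      have h2 : ∑ p, ‖f p‖ ^ 2 = ∑ m, (lam m)⁻¹ := by
        have he : ∀ p : Fin d × Fin d, ‖f p‖ ^ 2 = ‖U p.1 p.2‖ ^ 2 * (lam p.2)⁻¹ := by
          intro p
          rw [hfdef]
          simp only [norm_mul, mul_pow, Complex.norm_real, Real.norm_eq_abs]
          rw [abs_of_nonneg (by positivity), ← Real.sqrt_inv,
            Real.sq_sqrt (inv_nonneg.mpr (hlampos p.2).le)]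
        simp only [he, Fintype.sum_prod_type]
        rw [Finset.sum_comm]
        refine Finset.sum_congr rfl fun m _ => ?_
        rw [← Finset.sum_mul, hU2, one_mul]
      have h3 : ∑ p, ‖g p‖ ^ 2 = ∑ i, ∑ m, lam m * ‖c i m‖ ^ 2 := by
        have he : ∀ p : Fin d × Fin d, ‖g p‖ ^ 2 = lam p.2 * ‖c p.1 p.2‖ ^ 2 := by
          intro p
          rw [hgdef]
          simp only [norm_mul, mul_pow, Complex.norm_real, Real.norm_eq_abs]
          rw [abs_of_nonneg (by positivity), Real.sq_sqrt (hlampos p.2).le]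
        simp only [he, Fintype.sum_prod_type]
      rw [h1, ← h2, ← h3]
      exact qelb_cs_sum f g
    -- plain Cauchy–Schwarz
    have hCS2 : ‖star ψ ⬝ᵥ x‖ ^ 2 ≤ ∑ p, ‖x p‖ ^ 2 := by
      have h := qelb_cs_sum (star ψ) x
      simp only [Pi.star_apply, norm_star] at h
      rw [hψ, one_mul] at h
      simpa only [dotProduct, Pi.star_apply] using h
    have hQnn : 0 ≤ ∑ i, ∑ m, lam m * ‖c i m‖ ^ 2 :=
      Finset.sum_nonneg fun i _ => Finset.sum_nonneg fun m _ =>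
        mul_nonneg (hlampos m).le (sq_nonneg _)
    have hkey : lamH * ‖star ψ ⬝ᵥ x‖ ^ 2 ≤ ∑ i, ∑ m, lam m * ‖c i m‖ ^ 2 := by
      have h := mul_le_mul_of_nonneg_left hCS hlamHpos.le
      calc lamH * ‖star ψ ⬝ᵥ x‖ ^ 2
          ≤ lamH * ((∑ m, (lam m)⁻¹) * (∑ i, ∑ m, lam m * ‖c i m‖ ^ 2)) := h
        _ = ∑ i, ∑ m, lam m * ‖c i m‖ ^ 2 := by
            rw [hlamH, ← mul_assoc, inv_mul_cancel₀ hSpos.ne']; ring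
    rw [hMre]
    rcases le_or_gt α lamH with hc | hc
    · have hmin : min 0 (lamH - α) = 0 := min_eq_left (by linarith)
      rw [hmin, zero_mul, sub_nonneg]
      calc α * ‖star ψ ⬝ᵥ x‖ ^ 2 ≤ lamH * ‖star ψ ⬝ᵥ x‖ ^ 2 :=
            mul_le_mul_of_nonneg_right hc (sq_nonneg _)
        _ ≤ _ := hkey
    · have hmin : min 0 (lamH - α) = lamH - α := min_eq_right (by linarith)
      rw [hmin]
      have h1 : (lamH - α) * (∑ p, ‖x p‖ ^ 2) ≤ (lamH - α) * ‖star ψ ⬝ᵥ x‖ ^ 2 :=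
        mul_le_mul_of_nonpos_left hCS2 (by linarith)
      have h2 : (lamH - α) * ‖star ψ ⬝ᵥ x‖ ^ 2
          ≤ (∑ i, ∑ m, lam m * ‖c i m‖ ^ 2) - α * ‖star ψ ⬝ᵥ x‖ ^ 2 := by
        nlinarith [sq_nonneg ‖star ψ ⬝ᵥ x‖]
      linarith
  -- eigenvalue bound from the quadratic form
  have heig : ∀ i, min 0 (lamH - α) ≤ hM.eigenvalues i := by
    intro i
    set v : Fin d × Fin d → ℂ := ⇑(hM.eigenvectorBasis i) with hvdef
    have hv : M *ᵥ v = hM.eigenvalues i • v := hM.mulVec_eigenvectorBasis i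
    have hnv : ∑ p, ‖v p‖ ^ 2 = 1 := by
      have h1 : ‖hM.eigenvectorBasis i‖ = 1 := hM.eigenvectorBasis.orthonormal.1 i
      have h2 := EuclideanSpace.norm_eq (hM.eigenvectorBasis i)
      rw [h1] at h2
      have h3 : (0:ℝ) ≤ ∑ p, ‖(hM.eigenvectorBasis i) p‖ ^ 2 :=
        Finset.sum_nonneg fun _ _ => sq_nonneg _
      have h4 := Real.sq_sqrt h3
      rw [← h2] at h4
      simpa [hvdef] using h4.symm
    have hdot : (star v ⬝ᵥ M *ᵥ v).re = hM.eigenvalues i := by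
      rw [hv]
      have h5 : star v ⬝ᵥ (hM.eigenvalues i • v)
          = ((hM.eigenvalues i : ℂ)) * ((∑ p, ‖v p‖ ^ 2 : ℝ) : ℂ) := by
        simp only [dotProduct, Pi.smul_apply, Pi.star_apply, Complex.real_smul,
          RCLike.star_def]
        push_cast
        rw [Finset.mul_sum]
        refine Finset.sum_congr rfl fun p _ => ?_
        have h6 := qelb_conj_mul (v p)
        rw [show (starRingEnd ℂ) (v p) * ((hM.eigenvalues i : ℂ) * v p)
            = (hM.eigenvalues i : ℂ) * ((starRingEnd ℂ) (v p) * v p) from by ring, h6]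
        push_cast
        ring
      rw [h5, hnv]
      simp
    have hq := quad v
    rw [hnv, mul_one, hdot] at hq
    exact hq
  refine ⟨heig, fun hle => ?_, fun hlt i => ?_⟩
  · exact hM.posSemidef_iff_eigenvalues_nonneg.mpr fun i => by
      have h := heig i
      rw [min_eq_left (by linarith)] at h
      exact h
  · have h := heig i
    rw [min_eq_right (by linarith)] at h
    exact h
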